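/- arXiv:2102.08636 — 2 statements merged into one kernel-verified Lean document; each statement's English description precedes it below -/
import Mathlib

section
/- Let z_0 > 0, p > 1, let n be a natural number, and let B_j = B(2^j z_0, 2^j z_0) \subset \mathbb{C} for j = 0,...,n. Define \rho_0 : \mathbb{C} \to [0,\infty) by \rho_0(z) = 2/(2^j z_0) on B_j \setminus B_{j-1} (with B_{-1} = \emptyset) and \rho_0 = 0 outside B_n. Then \int_{\mathbb{C}} \rho_0(z)^{2p/(p-1)} dA(z) \le c_p \, z_0^{-2/(p-1)}, where c_p = 4^{p/(p-1)} \pi / (1 - 2^{-2/(p-1)}). -/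
open MeasureTheory Complex

/-- The weighted modulus test function estimate: with `B j = B(2ʲ z₀, 2ʲ z₀)` and `ρ₀`
equal to `2/(2ʲ z₀)` on `B j \ B (j-1)` (and `0` outside `B n`), one has
`∫ ρ₀^{2p/(p-1)} dA ≤ c_p z₀^{-2/(p-1)}` with
`c_p = 4^{p/(p-1)} π / (1 - 2^{-2/(p-1)})`. -/
theorem test_function_estimate (z₀ p : ℝ) (hz₀ : 0 < z₀) (hp : 1 < p) (n : ℕ)
    (B : ℕ → Set ℂ)
    (hB : ∀ j, B j = Metric.ball ((2 ^ j * z₀ : ℝ) : ℂ) (2 ^ j * z₀))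
    (ρ₀ : ℂ → ℝ)
    (hρ₀_0 : ∀ z ∈ B 0, ρ₀ z = 2 / z₀)
    (hρ₀_j : ∀ j, 1 ≤ j → j ≤ n → ∀ z ∈ B j \ B (j - 1), ρ₀ z = 2 / (2 ^ j * z₀))
    (hρ₀_out : ∀ z ∉ B n, ρ₀ z = 0) :
    ∫ z : ℂ, (ρ₀ z) ^ (2 * p / (p - 1)) ≤
      (4 : ℝ) ^ (p / (p - 1)) * Real.pi / (1 - (2 : ℝ) ^ (-2 / (p - 1)))
        * z₀ ^ (-2 / (p - 1)) := by
  have hp1 : (0:ℝ) < p - 1 := by linarith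
  set q : ℝ := 2 * p / (p - 1) with hq_def
  have hq2 : (2:ℝ) < q := by
    rw [hq_def, lt_div_iff₀ hp1]; nlinarith
  have hq_pos : (0:ℝ) < q := by linarith
  have hexp : (2:ℝ) - q = -2 / (p - 1) := by
    rw [hq_def]; field_simp; ring
  -- monotonicity of the balls
  have hBmono : Monotone B := by
    apply monotone_nat_of_le_succ
    intro j
    rw [hB j, hB (j+1)]
    apply Metric.ball_subset_ball'
    have : dist (((2:ℝ) ^ j * z₀ : ℝ) : ℂ) (((2:ℝ) ^ (j+1) * z₀ : ℝ) : ℂ)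
        = 2 ^ j * z₀ := by
      rw [Complex.dist_eq, ← Complex.ofReal_sub, Complex.norm_real, Real.norm_eq_abs, pow_succ]
      rw [abs_of_nonpos (by nlinarith [pow_pos (two_pos (α := ℝ)) j])]
      ring
    rw [this, pow_succ]; ring_nf; nlinarith [pow_pos (two_pos (α := ℝ)) j]
  -- the pieces
  set D : ℕ → Set ℂ := fun j => if j = 0 then B 0 else B j \ B (j-1) with hD_def
  have hDmeas : ∀ j, MeasurableSet (D j) := by
    intro j
    have hb : ∀ k, MeasurableSet (B k) := fun k => by
      rw [hB k]; exact measurableSet_ball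
    by_cases h : j = 0 <;> simp [hD_def, h, (hb _).diff (hb _), hb 0]
  have hDsub : ∀ j, D j ⊆ B j := by
    intro j z hz
    by_cases h : j = 0
    · simpa [hD_def, h] using hz
    · simp only [hD_def, if_neg h] at hz; exact hz.1
  -- pointwise identity
  have key : ∀ z, ρ₀ z ^ q =
      ∑ j ∈ Finset.range (n+1),
        Set.indicator (D j) (fun _ => (2 / (2 ^ j * z₀)) ^ q) z := by
    intro z
    classical
    by_cases hz : z ∈ B n
    · have hex : ∃ j, z ∈ B j := ⟨n, hz⟩
      set k := Nat.find hex with hk_def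
      have hk : z ∈ B k := Nat.find_spec hex
      have hkmin : ∀ j, j < k → z ∉ B j := fun j hj => Nat.find_min hex hj
      have hkn : k ≤ n := Nat.find_min' hex hz
      have hzDk : z ∈ D k := by
        by_cases h : k = 0
        · simp [hD_def, h, h ▸ hk]
        · simp only [hD_def, if_neg h]
          exact ⟨hk, hkmin (k-1) (by omega)⟩
      have hsum : ∑ j ∈ Finset.range (n+1),
          Set.indicator (D j) (fun _ => (2 / (2 ^ j * z₀)) ^ q) z
          = (2 / (2 ^ k * z₀)) ^ q := by
        rw [Finset.sum_eq_single_of_mem k (Finset.mem_range.2 (by omega))]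
        · rw [Set.indicator_of_mem hzDk]
        · intro j _ hjk
          apply Set.indicator_of_notMem
          rcases lt_or_gt_of_ne hjk with h | h
          · intro hzd; exact hkmin j h (hDsub j hzd)
          · have hj0 : j ≠ 0 := by omega
            simp only [hD_def, if_neg hj0]
            intro hzd
            exact hzd.2 (hBmono (by omega : k ≤ j - 1) hk)
      rw [hsum]
      congr 1
      by_cases h : k = 0
      · rw [h] at hk ⊢; rw [hρ₀_0 z hk]; norm_num
      · exact hρ₀_j k (by omega) hkn z (by simpa [hD_def, if_neg h] using hzDk)
    · rw [hρ₀_out z hz, Real.zero_rpow (ne_of_gt hq_pos)]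
      symm
      apply Finset.sum_eq_zero
      intro j hj
      apply Set.indicator_of_notMem
      intro hzd
      exact hz (hBmono (by have := Finset.mem_range.1 hj; omega : j ≤ n) (hDsub j hzd))
  -- volumes
  have hvolB : ∀ j, (volume (B j)).toReal = (2 ^ j * z₀)^2 * Real.pi := by
    intro j
    rw [hB j, Complex.volume_ball]
    rw [ENNReal.toReal_mul, ENNReal.toReal_pow, ENNReal.toReal_ofReal (by positivity)]
    norm_num [NNReal.coe_real_pi]
  have hvolD : ∀ j, volume (D j) < ⊤ := by
    intro j
    refine lt_of_le_of_lt (measure_mono (hDsub j)) ?_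
    rw [hB j]
    exact measure_ball_lt_top
  -- integrability of each piece
  have hint : ∀ j, Integrable
      (Set.indicator (D j) (fun _ => ((2 / (2 ^ j * z₀)) ^ q : ℝ))) := by
    intro j
    rw [integrable_indicator_iff (hDmeas j)]
    exact integrableOn_const (hvolD j).ne
  -- compute the integral
  have hIeq : ∫ z : ℂ, ρ₀ z ^ q =
      ∑ j ∈ Finset.range (n+1), (volume (D j)).toReal * (2 / (2 ^ j * z₀)) ^ q := by
    have : (fun z : ℂ => ρ₀ z ^ q) =
        fun z => ∑ j ∈ Finset.range (n+1),
          Set.indicator (D j) (fun _ => (2 / (2 ^ j * z₀)) ^ q) z := funext key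
    rw [this, integral_finset_sum _ (fun j _ => hint j)]
    refine Finset.sum_congr rfl (fun j _ => ?_)
    rw [integral_indicator_const _ (hDmeas j)]
    simp [mul_comm]
    exact Or.inl rfl
  -- term bound
  set r : ℝ := (2:ℝ) ^ ((2:ℝ) - q) with hr_def
  have hr0 : 0 < r := Real.rpow_pos_of_pos two_pos _
  have hr1 : r < 1 := Real.rpow_lt_one_of_one_lt_of_neg one_lt_two (by linarith)
  have hterm : ∀ j : ℕ, (volume (D j)).toReal * (2 / (2 ^ j * z₀)) ^ q ≤
      Real.pi * (2:ℝ) ^ q * z₀ ^ ((2:ℝ) - q) * r ^ j := by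
    intro j
    have h2j : (0:ℝ) < 2 ^ j := by positivity
    have hc : (0:ℝ) ≤ (2 / (2 ^ j * z₀)) ^ q :=
      Real.rpow_nonneg (by positivity) _
    have hvle : (volume (D j)).toReal ≤ (2 ^ j * z₀)^2 * Real.pi := by
      have hBtop : volume (B j) ≠ ⊤ := by
        rw [hB j]; exact measure_ball_lt_top.ne
      rw [← hvolB j]
      exact ENNReal.toReal_mono hBtop (measure_mono (hDsub j))
    calc (volume (D j)).toReal * (2 / (2 ^ j * z₀)) ^ q
        ≤ ((2 ^ j * z₀)^2 * Real.pi) * (2 / (2 ^ j * z₀)) ^ q := by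
          exact mul_le_mul_of_nonneg_right hvle hc
      _ = Real.pi * (2:ℝ) ^ q * z₀ ^ ((2:ℝ) - q) * r ^ j := by
          rw [Real.div_rpow (by norm_num) (by positivity),
            Real.mul_rpow h2j.le hz₀.le]
          have e1 : ((2:ℝ) ^ j) ^ q = (2:ℝ) ^ ((j:ℝ) * q) := by
            rw [← Real.rpow_natCast (2:ℝ) j, ← Real.rpow_mul (by norm_num)]
          have e2 : r ^ j = (2:ℝ) ^ ((j:ℝ) * (2 - q)) := by
            rw [hr_def, ← Real.rpow_natCast ((2:ℝ) ^ ((2:ℝ) - q)) j,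
              ← Real.rpow_mul (by norm_num)]
            ring_nf
          have e3 : z₀ ^ ((2:ℝ) - q) = z₀ ^ (2:ℕ) / z₀ ^ q := by
            rw [Real.rpow_sub hz₀]
            congr 1
            rw [← Real.rpow_natCast z₀ 2]
            norm_num
          have e4 : (2:ℝ) ^ ((j:ℝ) * (2 - q)) =
              ((2:ℝ) ^ j) ^ (2:ℕ) / (2:ℝ) ^ ((j:ℝ) * q) := by
            have h1 : (j:ℝ) * (2 - q) = 2 * (j:ℝ) - (j:ℝ) * q := by ring
            have h2 : ((2:ℝ) ^ j : ℝ) ^ (2:ℕ) = (2:ℝ) ^ ((2:ℝ) * (j:ℝ)) := by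
              rw [← Real.rpow_natCast (2:ℝ) j,
                ← Real.rpow_natCast ((2:ℝ) ^ ((j:ℝ))) 2,
                ← Real.rpow_mul (by norm_num)]
              congr 1
              push_cast; ring
            rw [h1, Real.rpow_sub two_pos, h2]
          rw [e1, e2, e3, e4]
          have hA : (0:ℝ) < (2:ℝ) ^ ((j:ℝ) * q) := Real.rpow_pos_of_pos two_pos _
          have hC : (0:ℝ) < z₀ ^ q := Real.rpow_pos_of_pos hz₀ _
          field_simp
  -- geometric sum
  have hgeom : ∑ j ∈ Finset.range (n+1), r ^ j ≤ 1 / (1 - r) := by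
    have hsummable : Summable (fun j : ℕ => r ^ j) :=
      summable_geometric_of_lt_one hr0.le hr1
    calc ∑ j ∈ Finset.range (n+1), r ^ j ≤ ∑' j : ℕ, r ^ j :=
          Summable.sum_le_tsum _ (fun i _ => pow_nonneg hr0.le i) hsummable
      _ = (1 - r)⁻¹ := tsum_geometric_of_lt_one hr0.le hr1
      _ = 1 / (1 - r) := (one_div _).symm
  -- assemble
  have hpos : (0:ℝ) ≤ Real.pi * (2:ℝ) ^ q * z₀ ^ ((2:ℝ) - q) := by
    have := Real.rpow_pos_of_pos hz₀ ((2:ℝ) - q)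
    have := Real.rpow_pos_of_pos (two_pos (α := ℝ)) q
    positivity
  have hfinal : ∫ z : ℂ, ρ₀ z ^ q ≤
      Real.pi * (2:ℝ) ^ q * z₀ ^ ((2:ℝ) - q) * (1 / (1 - r)) := by
    rw [hIeq]
    calc ∑ j ∈ Finset.range (n+1), (volume (D j)).toReal * (2 / (2 ^ j * z₀)) ^ q
        ≤ ∑ j ∈ Finset.range (n+1),
            Real.pi * (2:ℝ) ^ q * z₀ ^ ((2:ℝ) - q) * r ^ j :=
          Finset.sum_le_sum (fun j _ => hterm j)
      _ = Real.pi * (2:ℝ) ^ q * z₀ ^ ((2:ℝ) - q) *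
            ∑ j ∈ Finset.range (n+1), r ^ j := by rw [← Finset.mul_sum]
      _ ≤ Real.pi * (2:ℝ) ^ q * z₀ ^ ((2:ℝ) - q) * (1 / (1 - r)) :=
          mul_le_mul_of_nonneg_left hgeom hpos
  -- rewrite the RHS
  have h4 : (4:ℝ) ^ (p / (p-1)) = (2:ℝ) ^ q := by
    have : (4:ℝ) = (2:ℝ) ^ (2:ℝ) := by
      rw [show ((2:ℝ):ℝ) = ((2:ℕ):ℝ) by norm_num, Real.rpow_natCast]; norm_num
    rw [this, ← Real.rpow_mul (by norm_num)]
    congr 1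
    rw [hq_def]; ring
  rw [h4, ← hexp]
  calc ∫ z : ℂ, ρ₀ z ^ q ≤
      Real.pi * (2:ℝ) ^ q * z₀ ^ ((2:ℝ) - q) * (1 / (1 - r)) := hfinal
    _ = (2:ℝ) ^ q * Real.pi / (1 - (2:ℝ) ^ ((2:ℝ) - q)) * z₀ ^ ((2:ℝ) - q) := by
        rw [hr_def]; ring
end

section
/- For \alpha \in \mathbb{R} and 0 < r < R, the annular rotation map \phi_A (equal to z for |z|>R, z e^{i\alpha\log(|z|/R)} for r\le|z|\le R, and z e^{i\alpha\log(r/R)} for |z|<r) is a homeomorphism of \mathbb{C} onto itself. -/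
open Complex

private noncomputable def annG (α r R : ℝ) (z : ℂ) : ℂ :=
  z * Complex.exp (Complex.I * α * Real.log (min (max (‖z‖) r) R / R))

private lemma annG_abs (α r R : ℝ) (z : ℂ) : ‖annG α r R z‖ = ‖z‖ := by
  simp [annG, Complex.norm_exp]

private lemma annG_cont (α r R : ℝ) (hr : 0 < r) (hrR : r < R) :
    Continuous (annG α r R) := by
  have hR : 0 < R := hr.trans hrR
  apply Continuous.mul continuous_id
  apply Complex.continuous_exp.comp
  apply Continuous.mul continuous_const
  apply Continuous.comp Complex.continuous_ofReal
  apply Continuous.log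
  · exact ((continuous_norm.max continuous_const).min continuous_const).div_const R
  · intro x
    have h1 : r ≤ max (‖x‖) r := le_max_right _ _
    have : 0 < min (max (‖x‖) r) R := lt_min (hr.trans_le h1) hR
    positivity

private lemma annG_inv (α r R : ℝ) (z : ℂ) : annG (-α) r R (annG α r R z) = z := by
  rw [annG, annG_abs, annG, mul_assoc, ← Complex.exp_add]
  have h0 : Complex.I * ↑α * ↑(Real.log (min (max (‖z‖) r) R / R)) +
      Complex.I * ↑(-α) * ↑(Real.log (min (max (‖z‖) r) R / R)) = 0 := by
    push_cast; ring
  rw [h0, Complex.exp_zero, mul_one]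

/-- The annular rotation map `φ_A` is a homeomorphism of `ℂ` onto itself. -/
theorem annular_rotation_homeomorph (α r R : ℝ) (hr : 0 < r) (hrR : r < R)
    (φ : ℂ → ℂ)
    (hout : ∀ z : ℂ, R < ‖z‖ → φ z = z)
    (hmid : ∀ z : ℂ, r ≤ ‖z‖ → ‖z‖ ≤ R →
      φ z = z * Complex.exp (Complex.I * α * Real.log (‖z‖ / R)))
    (hin : ∀ z : ℂ, ‖z‖ < r →
      φ z = z * Complex.exp (Complex.I * α * Real.log (r / R))) :
    ∃ h : ℂ ≃ₜ ℂ, ⇑h = φ := by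
  have hG : annG α r R = φ := by
    funext z
    rcases lt_or_ge R (‖z‖) with h | h
    · rw [hout z h, annG]
      have h1 : max (‖z‖) r = ‖z‖ := max_eq_left ((hrR.trans h).le)
      have h2 : min (‖z‖) R = R := min_eq_right h.le
      have hR : (0:ℝ) < R := hr.trans hrR
      rw [h1, h2, div_self hR.ne', Real.log_one]
      simp
    · rcases lt_or_ge (‖z‖) r with h' | h'
      · rw [hin z h', annG]
        have h1 : max (‖z‖) r = r := max_eq_right h'.le
        have h2 : min r R = r := min_eq_left hrR.le
        rw [h1, h2]
      · rw [hmid z h' h, annG]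
        have h1 : max (‖z‖) r = ‖z‖ := max_eq_left h'
        have h2 : min (‖z‖) R = ‖z‖ := min_eq_left h
        rw [h1, h2]
  refine ⟨⟨⟨annG α r R, annG (-α) r R, fun z => annG_inv α r R z, fun z => ?_⟩,
      annG_cont α r R hr hrR, annG_cont (-α) r R hr hrR⟩, hG⟩
  have := annG_inv (-α) r R z
  simpa using this
end
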